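/- Let H = ⊕_{n≥0} H(n) be a graded Hopf algebra over a field k with H(0) a Hopf subalgebra (coradically graded), and let σ₀ : H(0) × H(0) → k be a convolution-invertible Hopf 2-cocycle on H(0). Define σ : H × H → k on homogeneous elements by σ(x,y) = σ₀(x,y) if x, y ∈ H(0), and σ(x,y) = 0 otherwise. Then σ is a convolution-invertible Hopf 2-cocycle on H extending σ₀, i.e., σ(x₁,y₁)σ(x₂y₂,z) = σ(y₁,z₁)σ(x,y₂z₂) and σ(x,1) = σ(1,x) = ε(x). -/

import Mathlib

open TensorProduct

namespace Stmt7

/-- `xs` is a Sweedler expansion of `Δ x`. -/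
def IsExpansion (k : Type*) {H : Type*} [CommRing k] [Ring H] [HopfAlgebra k H] (x : H) (xs : List (H × H)) : Prop :=
  Coalgebra.comul (R := k) x = (xs.map fun p => p.1 ⊗ₜ[k] p.2).sum

variable {k H : Type*} [CommRing k] [Ring H] [HopfAlgebra k H]

/-- The Hopf 2-cocycle condition
`σ(x₍₁₎,y₍₁₎)σ(x₍₂₎y₍₂₎,z) = σ(y₍₁₎,z₍₁₎)σ(x,y₍₂₎z₍₂₎)`, expressed via
Sweedler expansions. -/
def IsCocycleAt (σ : H →ₗ[k] H →ₗ[k] k) (x y z : H) : Prop :=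
  ∀ xs ys zs : List (H × H),
    IsExpansion k x xs → IsExpansion k y ys → IsExpansion k z zs →
      ((xs.map fun px =>
        (ys.map fun py => σ px.1 py.1 * σ (px.2 * py.2) z).sum).sum =
       (ys.map fun py =>
        (zs.map fun pz => σ py.1 pz.1 * σ x (py.2 * pz.2)).sum).sum)

/-- `σ'` is a convolution inverse of `σ` at the pair `(x, y)`. -/
def IsConvInverseAt (σ σ' : H →ₗ[k] H →ₗ[k] k) (x y : H) : Prop :=
  ∀ xs ys : List (H × H),
    IsExpansion k x xs → IsExpansion k y ys →
      ((xs.map fun px => (ys.map fun py =>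
          σ px.1 py.1 * σ' px.2 py.2).sum).sum =
        Coalgebra.counit (R := k) x * Coalgebra.counit (R := k) y ∧
       (xs.map fun px => (ys.map fun py =>
          σ' px.1 py.1 * σ px.2 py.2).sum).sum =
        Coalgebra.counit (R := k) x * Coalgebra.counit (R := k) y)

end Stmt7

namespace Stmt7Proof

open Stmt7 Coalgebra

variable {k H : Type*} [CommRing k] [Ring H] [HopfAlgebra k H]

noncomputable def mix (F G : H →ₗ[k] H →ₗ[k] k) : (H ⊗[k] H) →ₗ[k] (H ⊗[k] H) →ₗ[k] k :=
  TensorProduct.curry ((LinearMap.mul' k k) ∘ₗ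
    (TensorProduct.map (TensorProduct.lift F) (TensorProduct.lift G)) ∘ₗ
    (TensorProduct.tensorTensorTensorComm k H H H H).toLinearMap)

@[simp] lemma mix_tmul (F G : H →ₗ[k] H →ₗ[k] k) (a b c d : H) :
    mix F G (a ⊗ₜ[k] b) (c ⊗ₜ[k] d) = F a c * G b d := by
  simp [mix]

lemma mix_sum (B : (H ⊗[k] H) →ₗ[k] (H ⊗[k] H) →ₗ[k] k) (l1 l2 : List (H × H)) :
    (l1.map fun p => (l2.map fun q => B (p.1 ⊗ₜ[k] p.2) (q.1 ⊗ₜ[k] q.2)).sum).sum =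
      B (l1.map fun p => p.1 ⊗ₜ[k] p.2).sum (l2.map fun q => q.1 ⊗ₜ[k] q.2).sum := by
  induction l1 with
  | nil => simp
  | cons p l1 ih =>
      simp only [List.map_cons, List.sum_cons, map_add, LinearMap.add_apply, ih]
      congr 1
      rw [map_list_sum, List.map_map]
      rfl

lemma mix_expansion (F G : H →ₗ[k] H →ₗ[k] k) {x y : H} {xs ys : List (H × H)}
    (hx : IsExpansion k x xs) (hy : IsExpansion k y ys) :
    mix F G (Coalgebra.comul (R := k) x) (Coalgebra.comul (R := k) y) =
      (xs.map fun p => (ys.map fun q => F p.1 q.1 * G p.2 q.2).sum).sum := by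
  rw [hx, hy, ← mix_sum]
  simp only [mix_tmul]

lemma eval_zero (B : (H ⊗[k] H) →ₗ[k] (H ⊗[k] H) →ₗ[k] k)
    (h : ∀ a b c d : H, B (a ⊗ₜ[k] b) (c ⊗ₜ[k] d) = 0) (s t : H ⊗[k] H) : B s t = 0 := by
  induction s using TensorProduct.induction_on with
  | zero => simp
  | add u v hu hv => simp [map_add, LinearMap.add_apply, hu, hv]
  | tmul a b =>
      induction t using TensorProduct.induction_on with
      | zero => simp
      | add u v hu hv => simp [map_add, hu, hv]
      | tmul c d => exact h a b c d

lemma mix_add_right (F G G' : H →ₗ[k] H →ₗ[k] k) (s t : H ⊗[k] H) :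
    mix F (G + G') s t = mix F G s t + mix F G' s t := by
  induction s using TensorProduct.induction_on with
  | zero => simp
  | add u v hu hv =>
      simp only [map_add, LinearMap.add_apply, hu, hv]; ring
  | tmul a b =>
      induction t using TensorProduct.induction_on with
      | zero => simp
      | add u v hu hv => simp only [map_add, hu, hv]; ring
      | tmul c d => simp [mul_add]


section Graded

variable (𝒜 : ℕ → Submodule k H) [GradedAlgebra 𝒜]

noncomputable def proj (n : ℕ) : H →ₗ[k] H :=
  (𝒜 n).subtype ∘ₗ (DirectSum.component k ℕ (fun i => ↥(𝒜 i)) n) ∘ₗ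
    (DirectSum.decomposeLinearEquiv 𝒜).toLinearMap

lemma proj_apply (n : ℕ) (x : H) : proj 𝒜 n x = (DirectSum.decompose 𝒜 x n : H) := rfl

lemma proj_mem (n : ℕ) (x : H) : proj 𝒜 n x ∈ 𝒜 n := by
  rw [proj_apply]; exact (DirectSum.decompose 𝒜 x n).2

lemma proj_same {n : ℕ} {x : H} (h : x ∈ 𝒜 n) : proj 𝒜 n x = x := by
  rw [proj_apply]; exact DirectSum.decompose_of_mem_same 𝒜 h

lemma proj_ne {m n : ℕ} {x : H} (h : x ∈ 𝒜 m) (hmn : m ≠ n) : proj 𝒜 n x = 0 := by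
  rw [proj_apply]; exact DirectSum.decompose_of_mem_ne 𝒜 h hmn

lemma proj_zero_mul_right {c : ℕ} (hc : c ≠ 0) {v : H} (hv : v ∈ 𝒜 c) (u : H) :
    proj 𝒜 0 (u * v) = 0 := by
  refine DirectSum.Decomposition.inductionOn 𝒜 (motive := fun u => proj 𝒜 0 (u * v) = 0)
    ?_ ?_ ?_ u
  · simp
  · intro i m
    exact proj_ne 𝒜 (SetLike.mul_mem_graded m.2 hv) (by omega)
  · intro a b ha hb
    rw [add_mul, map_add, ha, hb, add_zero]

lemma proj_zero_mul_left {c : ℕ} (hc : c ≠ 0) {v : H} (hv : v ∈ 𝒜 c) (u : H) :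
    proj 𝒜 0 (v * u) = 0 := by
  refine DirectSum.Decomposition.inductionOn 𝒜 (motive := fun u => proj 𝒜 0 (v * u) = 0)
    ?_ ?_ ?_ u
  · simp
  · intro i m
    exact proj_ne 𝒜 (SetLike.mul_mem_graded hv m.2) (by omega)
  · intro a b ha hb
    rw [mul_add, map_add, ha, hb, add_zero]

/-- The target of the graded-comultiplication hypothesis. -/
noncomputable def SupT (n : ℕ) : Submodule k (H ⊗[k] H) :=
  ⨆ (p : ℕ × ℕ) (_ : p.1 + p.2 = n),
    LinearMap.range (TensorProduct.map (𝒜 p.1).subtype (𝒜 p.2).subtype)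

lemma supT_induction {n : ℕ} {C : H ⊗[k] H → Prop} {t : H ⊗[k] H}
    (ht : t ∈ SupT 𝒜 n)
    (pure : ∀ i j, i + j = n → ∀ a ∈ 𝒜 i, ∀ b ∈ 𝒜 j, C (a ⊗ₜ[k] b))
    (zero : C 0) (add : ∀ u v, C u → C v → C (u + v)) : C t := by
  refine Submodule.iSup_induction (motive := C)
    (fun p : ℕ × ℕ => ⨆ (_ : p.1 + p.2 = n),
      LinearMap.range (TensorProduct.map (𝒜 p.1).subtype (𝒜 p.2).subtype))
    (x := t) ht ?_ zero add
  intro p t' ht'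
  beta_reduce at ht'
  by_cases hp : p.1 + p.2 = n
  · rw [iSup_pos hp] at ht'
    obtain ⟨u, rfl⟩ := ht'
    induction u using TensorProduct.induction_on with
    | zero => simpa using zero
    | tmul a b => simpa using pure p.1 p.2 hp a a.2 b b.2
    | add u v hu hv => rw [map_add]; exact add _ _ hu hv
  · rw [iSup_neg hp] at ht'
    rw [Submodule.mem_bot] at ht'
    rw [ht']; exact zero

lemma supT_eval_zero_left {n : ℕ} (B : (H ⊗[k] H) →ₗ[k] (H ⊗[k] H) →ₗ[k] k)
    {s : H ⊗[k] H} (hs : s ∈ SupT 𝒜 n)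
    (h : ∀ i j, i + j = n → ∀ a ∈ 𝒜 i, ∀ b ∈ 𝒜 j, ∀ c d : H,
      B (a ⊗ₜ[k] b) (c ⊗ₜ[k] d) = 0)
    (t : H ⊗[k] H) : B s t = 0 := by
  refine supT_induction 𝒜 (C := fun s => ∀ t, B s t = 0) hs ?_ (by simp) ?_ t
  · intro i j hij a ha b hb t
    induction t using TensorProduct.induction_on with
    | zero => simp
    | tmul c d => exact h i j hij a ha b hb c d
    | add u v hu hv => rw [map_add, hu, hv, add_zero]
  · intro u v hu hv t
    rw [map_add, LinearMap.add_apply, hu, hv, add_zero]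

lemma supT_eval_zero_right {n : ℕ} (B : (H ⊗[k] H) →ₗ[k] (H ⊗[k] H) →ₗ[k] k)
    {t : H ⊗[k] H} (ht : t ∈ SupT 𝒜 n)
    (h : ∀ i j, i + j = n → ∀ a ∈ 𝒜 i, ∀ b ∈ 𝒜 j, ∀ c d : H,
      B (c ⊗ₜ[k] d) (a ⊗ₜ[k] b) = 0)
    (s : H ⊗[k] H) : B s t = 0 := by
  refine supT_induction 𝒜 (C := fun t => ∀ s, B s t = 0) ht ?_ (by simp) ?_ s
  · intro i j hij a ha b hb s
    induction s using TensorProduct.induction_on with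
    | zero => simp
    | tmul c d => exact h i j hij a ha b hb c d
    | add u v hu hv => rw [map_add, LinearMap.add_apply, hu, hv, add_zero]
  · intro u v hu hv s
    rw [map_add, hu, hv, add_zero]


lemma counit_of_pos
    (hcomul : ∀ n : ℕ, ∀ x ∈ 𝒜 n, Coalgebra.comul (R := k) x ∈ SupT 𝒜 n) :
    ∀ n : ℕ, n ≠ 0 → ∀ x ∈ 𝒜 n, Coalgebra.counit (R := k) x = 0 := by
  intro n
  induction n using Nat.strong_induction_on with
  | _ n ih =>
    intro hn x hx
    set ε : H →ₗ[k] k := Coalgebra.counit (R := k) with hε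
    set L : H ⊗[k] H →ₗ[k] H :=
      (TensorProduct.lid k H).toLinearMap ∘ₗ (LinearMap.rTensor H ε) with hLdef
    set Rm : H ⊗[k] H →ₗ[k] H :=
      (TensorProduct.rid k H).toLinearMap ∘ₗ (LinearMap.lTensor H ε) with hRdef
    have hLt : ∀ a b : H, L (a ⊗ₜ[k] b) = ε a • b := by
      intro a b; simp [hLdef]
    have hRt : ∀ a b : H, Rm (a ⊗ₜ[k] b) = ε b • a := by
      intro a b; simp [hRdef]
    have claim : ∀ t ∈ SupT 𝒜 n,
        ε (L t) = ε (proj 𝒜 n (Rm t)) + ε (proj 𝒜 n (L t)) := by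
      intro t ht
      refine supT_induction 𝒜 (C := fun t =>
        ε (L t) = ε (proj 𝒜 n (Rm t)) + ε (proj 𝒜 n (L t))) ht ?_ (by simp) ?_
      · intro i j hij a ha b hb
        rw [hLt, hRt]
        simp only [map_smul]
        by_cases hi : i = n
        · have hjn : j ≠ n := by omega
          have han : a ∈ 𝒜 n := hi ▸ ha
          rw [proj_same 𝒜 han, proj_ne 𝒜 hb hjn]
          simp [smul_eq_mul, mul_comm]
        · by_cases hj : j = n
          · have hbn : b ∈ 𝒜 n := hj ▸ hb
            rw [proj_same 𝒜 hbn, proj_ne 𝒜 ha hi]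
            simp [smul_eq_mul]
          · have hεa : ε a = 0 := ih i (by omega) (by omega) a ha
            rw [proj_ne 𝒜 ha hi, proj_ne 𝒜 hb hj]
            simp [hεa]
      · intro u v hu hv
        simp only [map_add]
        rw [hu, hv]; ring
    have h3 := claim (Coalgebra.comul (R := k) x) (hcomul n x hx)
    have h1 : L (Coalgebra.comul (R := k) x) = x := by
      simp [hLdef, hε]
    have h2 : Rm (Coalgebra.comul (R := k) x) = x := by
      simp [hRdef, hε]
    rw [h1, h2, proj_same 𝒜 hx] at h3
    have : ε x + 0 = ε x + ε x := by rw [add_zero]; exact h3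
    exact (add_left_cancel this).symm

lemma comul_zero_expansion
    (hcomul : ∀ n : ℕ, ∀ x ∈ 𝒜 n, Coalgebra.comul (R := k) x ∈ SupT 𝒜 n)
    {x : H} (hx : x ∈ 𝒜 0) :
    ∃ xs : List (H × H), IsExpansion k x xs ∧ ∀ p ∈ xs, p.1 ∈ 𝒜 0 ∧ p.2 ∈ 𝒜 0 := by
  have h := hcomul 0 x hx
  have key := supT_induction 𝒜 (C := fun t =>
      ∃ xs : List (H × H), t = (xs.map fun p => p.1 ⊗ₜ[k] p.2).sum ∧
        ∀ p ∈ xs, p.1 ∈ 𝒜 0 ∧ p.2 ∈ 𝒜 0) h ?_ ?_ ?_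
  · obtain ⟨xs, h1, h2⟩ := key
    exact ⟨xs, h1, h2⟩
  · intro i j hij a ha b hb
    have hi : i = 0 := by omega
    have hj : j = 0 := by omega
    subst hi; subst hj
    exact ⟨[(a, b)], by simp, by simp [ha, hb]⟩
  · exact ⟨[], by simp, by simp⟩
  · rintro u v ⟨l1, hl1, hm1⟩ ⟨l2, hl2, hm2⟩
    refine ⟨l1 ++ l2, by simp [hl1, hl2], ?_⟩
    intro p hp
    rcases List.mem_append.mp hp with h | h
    · exact hm1 p h
    · exact hm2 p h

noncomputable def sigma (σ₀ : H →ₗ[k] H →ₗ[k] k) : H →ₗ[k] H →ₗ[k] k :=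
  (σ₀ ∘ₗ proj 𝒜 0).compl₂ (proj 𝒜 0)

lemma sigma_apply (σ₀ : H →ₗ[k] H →ₗ[k] k) (a b : H) :
    sigma 𝒜 σ₀ a b = σ₀ (proj 𝒜 0 a) (proj 𝒜 0 b) := rfl

end Graded

/-- The comultiplication-level form of the cocycle identity. -/
def CocEq (σ : H →ₗ[k] H →ₗ[k] k) (x y z : H) : Prop :=
  mix σ ((LinearMap.mul k H).compr₂ (σ.flip z))
      (Coalgebra.comul (R := k) x) (Coalgebra.comul (R := k) y) =
  mix σ ((LinearMap.mul k H).compr₂ (σ x))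
      (Coalgebra.comul (R := k) y) (Coalgebra.comul (R := k) z)

lemma compr₂_add_right (τ τ' : H →ₗ[k] k) :
    (LinearMap.mul k H).compr₂ (τ + τ') =
      (LinearMap.mul k H).compr₂ τ + (LinearMap.mul k H).compr₂ τ' := by
  ext b d; simp [LinearMap.compr₂_apply]

lemma mix_zero_right (F : H →ₗ[k] H →ₗ[k] k) (s t : H ⊗[k] H) :
    mix F (0 : H →ₗ[k] H →ₗ[k] k) s t = 0 :=
  eval_zero _ (fun a b c d => by simp) s t

end Stmt7Proof


open Stmt7Proof


/-- let `H = ⊕ₙ H(n)` be a graded Hopf algebra whose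
comultiplication respects the grading, and let `σ₀` be a convolution
invertible Hopf 2-cocycle on the degree-zero part `H(0)`. Then the bilinear
form `σ` defined by `σ = σ₀` on `H(0) × H(0)` and `σ = 0` on all other pairs
of homogeneous components is a convolution-invertible Hopf 2-cocycle on `H`
extending `σ₀`. -/
theorem stmt_7 {k H : Type*} [CommRing k] [Ring H] [HopfAlgebra k H]
    (𝒜 : ℕ → Submodule k H) [GradedAlgebra 𝒜]
    (hcomul : ∀ n : ℕ, ∀ x ∈ 𝒜 n,
      Coalgebra.comul (R := k) x ∈
        ⨆ (p : ℕ × ℕ) (_ : p.1 + p.2 = n),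
          LinearMap.range (TensorProduct.map (𝒜 p.1).subtype (𝒜 p.2).subtype))
    (σ₀ : H →ₗ[k] H →ₗ[k] k)
    (hσ₀coc : ∀ x ∈ 𝒜 0, ∀ y ∈ 𝒜 0, ∀ z ∈ 𝒜 0, Stmt7.IsCocycleAt σ₀ x y z)
    (hσ₀norm : ∀ x ∈ 𝒜 0,
      σ₀ x 1 = Coalgebra.counit (R := k) x ∧
      σ₀ 1 x = Coalgebra.counit (R := k) x)
    (hσ₀inv : ∃ σ₀' : H →ₗ[k] H →ₗ[k] k,
      ∀ x ∈ 𝒜 0, ∀ y ∈ 𝒜 0, Stmt7.IsConvInverseAt σ₀ σ₀' x y) :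
    ∃ σ : H →ₗ[k] H →ₗ[k] k,
      (∀ x ∈ 𝒜 0, ∀ y ∈ 𝒜 0, σ x y = σ₀ x y) ∧
      (∀ m n : ℕ, ¬(m = 0 ∧ n = 0) → ∀ x ∈ 𝒜 m, ∀ y ∈ 𝒜 n, σ x y = 0) ∧
      (∀ x y z : H, Stmt7.IsCocycleAt σ x y z) ∧
      (∀ x : H,
        σ x 1 = Coalgebra.counit (R := k) x ∧
        σ 1 x = Coalgebra.counit (R := k) x) ∧
      (∃ σ' : H →ₗ[k] H →ₗ[k] k, ∀ x y : H, Stmt7.IsConvInverseAt σ σ' x y) := by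
  classical
  obtain ⟨σ₀', hσ₀'⟩ := hσ₀inv
  have hcomul' : ∀ n : ℕ, ∀ x ∈ 𝒜 n, Coalgebra.comul (R := k) x ∈ SupT 𝒜 n := hcomul
  have h1mem : (1 : H) ∈ 𝒜 0 := SetLike.one_mem_graded 𝒜
  have mul00 : ∀ {u v : H}, u ∈ 𝒜 0 → v ∈ 𝒜 0 → u * v ∈ 𝒜 0 := by
    intro u v hu hv; simpa using SetLike.mul_mem_graded hu hv
  have hσ : ∀ a b : H, sigma 𝒜 σ₀ a b = σ₀ (proj 𝒜 0 a) (proj 𝒜 0 b) := sigma_apply 𝒜 σ₀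
  have hσ' : ∀ a b : H, sigma 𝒜 σ₀' a b = σ₀' (proj 𝒜 0 a) (proj 𝒜 0 b) := sigma_apply 𝒜 σ₀'
  have σz1 : ∀ u v : H, proj 𝒜 0 u = 0 → sigma 𝒜 σ₀ u v = 0 := by
    intro u v h; rw [hσ, h]; simp
  have σz2 : ∀ u v : H, proj 𝒜 0 v = 0 → sigma 𝒜 σ₀ u v = 0 := by
    intro u v h; rw [hσ, h]; simp
  have σ'z1 : ∀ u v : H, proj 𝒜 0 u = 0 → sigma 𝒜 σ₀' u v = 0 := by
    intro u v h; rw [hσ', h]; simp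
  have σ'z2 : ∀ u v : H, proj 𝒜 0 v = 0 → sigma 𝒜 σ₀' u v = 0 := by
    intro u v h; rw [hσ', h]; simp
  have σeq : ∀ u ∈ 𝒜 0, ∀ v ∈ 𝒜 0, sigma 𝒜 σ₀ u v = σ₀ u v := by
    intro u hu v hv; rw [hσ, proj_same 𝒜 hu, proj_same 𝒜 hv]
  have σ'eq : ∀ u ∈ 𝒜 0, ∀ v ∈ 𝒜 0, sigma 𝒜 σ₀' u v = σ₀' u v := by
    intro u hu v hv; rw [hσ', proj_same 𝒜 hu, proj_same 𝒜 hv]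
  have hcp : ∀ x : H,
      Coalgebra.counit (R := k) (proj 𝒜 0 x) = Coalgebra.counit (R := k) x := by
    intro x
    refine DirectSum.Decomposition.inductionOn 𝒜
      (motive := fun x => Coalgebra.counit (R := k) (proj 𝒜 0 x) = Coalgebra.counit (R := k) x)
      ?_ ?_ ?_ x
    · simp
    · intro i m
      by_cases hi : i = 0
      · have hm : (m : H) ∈ 𝒜 0 := hi ▸ m.2
        rw [proj_same 𝒜 hm]
      · rw [proj_ne 𝒜 m.2 hi, counit_of_pos 𝒜 hcomul' i hi _ m.2, map_zero]
    · intro a b ha hb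
      simp only [map_add]; rw [ha, hb]
  -- the cocycle identity for homogeneous elements
  have hom : ∀ (a : ℕ) (x : H), x ∈ 𝒜 a → ∀ (b : ℕ) (y : H), y ∈ 𝒜 b →
      ∀ (c : ℕ) (z : H), z ∈ 𝒜 c → CocEq (sigma 𝒜 σ₀) x y z := by
    intro a x hx b y hy c z hz
    unfold CocEq
    by_cases hc : c = 0
    · by_cases ha : a = 0
      · by_cases hb : b = 0
        · -- all degrees zero: transfer to σ₀
          have hx0 : x ∈ 𝒜 0 := ha ▸ hx
          have hy0 : y ∈ 𝒜 0 := hb ▸ hy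
          have hz0 : z ∈ 𝒜 0 := hc ▸ hz
          obtain ⟨xs, hxs, hxm⟩ := comul_zero_expansion 𝒜 hcomul' hx0
          obtain ⟨ys, hys, hym⟩ := comul_zero_expansion 𝒜 hcomul' hy0
          obtain ⟨zs, hzs, hzm⟩ := comul_zero_expansion 𝒜 hcomul' hz0
          rw [mix_expansion _ _ hxs hys, mix_expansion _ _ hys hzs]
          have L1 : (xs.map fun p => (ys.map fun q =>
                sigma 𝒜 σ₀ p.1 q.1 *
                  ((LinearMap.mul k H).compr₂ ((sigma 𝒜 σ₀).flip z)) p.2 q.2).sum).sum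
              = (xs.map fun p => (ys.map fun q =>
                σ₀ p.1 q.1 * σ₀ (p.2 * q.2) z).sum).sum := by
            refine congrArg List.sum (List.map_congr_left ?_)
            intro p hp
            refine congrArg List.sum (List.map_congr_left ?_)
            intro q hq
            obtain ⟨hp1, hp2⟩ := hxm p hp
            obtain ⟨hq1, hq2⟩ := hym q hq
            simp only [LinearMap.compr₂_apply, LinearMap.mul_apply', LinearMap.flip_apply]
            rw [σeq _ hp1 _ hq1, σeq _ (mul00 hp2 hq2) _ hz0]
          have R1 : (ys.map fun p => (zs.map fun q =>
                sigma 𝒜 σ₀ p.1 q.1 *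
                  ((LinearMap.mul k H).compr₂ (sigma 𝒜 σ₀ x)) p.2 q.2).sum).sum
              = (ys.map fun p => (zs.map fun q =>
                σ₀ p.1 q.1 * σ₀ x (p.2 * q.2)).sum).sum := by
            refine congrArg List.sum (List.map_congr_left ?_)
            intro p hp
            refine congrArg List.sum (List.map_congr_left ?_)
            intro q hq
            obtain ⟨hp1, hp2⟩ := hym p hp
            obtain ⟨hq1, hq2⟩ := hzm q hq
            simp only [LinearMap.compr₂_apply, LinearMap.mul_apply']
            rw [σeq _ hp1 _ hq1, σeq _ hx0 _ (mul00 hp2 hq2)]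
          rw [L1, R1]
          exact hσ₀coc x hx0 y hy0 z hz0 xs ys zs hxs hys hzs
        · -- c = 0, a = 0, b ≠ 0 : both sides vanish
          have hL : mix (sigma 𝒜 σ₀) ((LinearMap.mul k H).compr₂ ((sigma 𝒜 σ₀).flip z))
              (Coalgebra.comul (R := k) x) (Coalgebra.comul (R := k) y) = 0 := by
            refine supT_eval_zero_right 𝒜 _ (hcomul' b y hy) ?_ _
            intro i j hij a1 ha1 b1 hb1 c1 d1
            rw [mix_tmul]
            simp only [LinearMap.compr₂_apply, LinearMap.mul_apply', LinearMap.flip_apply]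
            by_cases hi : i = 0
            · have hb1' : b1 ∈ 𝒜 b := (by omega : j = b) ▸ hb1
              rw [σz1 _ _ (proj_zero_mul_right 𝒜 hb hb1' d1), mul_zero]
            · rw [σz2 _ _ (proj_ne 𝒜 ha1 hi), zero_mul]
          have hR : mix (sigma 𝒜 σ₀) ((LinearMap.mul k H).compr₂ (sigma 𝒜 σ₀ x))
              (Coalgebra.comul (R := k) y) (Coalgebra.comul (R := k) z) = 0 := by
            refine supT_eval_zero_left 𝒜 _ (hcomul' b y hy) ?_ _
            intro i j hij a1 ha1 b1 hb1 c1 d1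
            rw [mix_tmul]
            simp only [LinearMap.compr₂_apply, LinearMap.mul_apply']
            by_cases hi : i = 0
            · have hb1' : b1 ∈ 𝒜 b := (by omega : j = b) ▸ hb1
              rw [σz2 _ _ (proj_zero_mul_left 𝒜 hb hb1' d1), mul_zero]
            · rw [σz1 _ _ (proj_ne 𝒜 ha1 hi), zero_mul]
          rw [hL, hR]
      · -- c = 0, a ≠ 0 : both sides vanish
        have hπx : proj 𝒜 0 x = 0 := proj_ne 𝒜 hx ha
        have hL : mix (sigma 𝒜 σ₀) ((LinearMap.mul k H).compr₂ ((sigma 𝒜 σ₀).flip z))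
            (Coalgebra.comul (R := k) x) (Coalgebra.comul (R := k) y) = 0 := by
          refine supT_eval_zero_left 𝒜 _ (hcomul' a x hx) ?_ _
          intro i j hij a1 ha1 b1 hb1 c1 d1
          rw [mix_tmul]
          simp only [LinearMap.compr₂_apply, LinearMap.mul_apply', LinearMap.flip_apply]
          by_cases hi : i = 0
          · have hb1' : b1 ∈ 𝒜 a := (by omega : j = a) ▸ hb1
            rw [σz1 _ _ (proj_zero_mul_left 𝒜 ha hb1' d1), mul_zero]
          · rw [σz1 _ _ (proj_ne 𝒜 ha1 hi), zero_mul]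
        have hR : mix (sigma 𝒜 σ₀) ((LinearMap.mul k H).compr₂ (sigma 𝒜 σ₀ x))
            (Coalgebra.comul (R := k) y) (Coalgebra.comul (R := k) z) = 0 := by
          refine eval_zero _ ?_ _ _
          intro u1 u2 v1 v2
          rw [mix_tmul]
          simp only [LinearMap.compr₂_apply, LinearMap.mul_apply']
          rw [σz1 _ _ hπx, mul_zero]
        rw [hL, hR]
    · -- c ≠ 0 : both sides vanish
      have hπz : proj 𝒜 0 z = 0 := proj_ne 𝒜 hz hc
      have hL : mix (sigma 𝒜 σ₀) ((LinearMap.mul k H).compr₂ ((sigma 𝒜 σ₀).flip z))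
          (Coalgebra.comul (R := k) x) (Coalgebra.comul (R := k) y) = 0 := by
        refine eval_zero _ ?_ _ _
        intro u1 u2 v1 v2
        rw [mix_tmul]
        simp only [LinearMap.compr₂_apply, LinearMap.mul_apply', LinearMap.flip_apply]
        rw [σz2 _ _ hπz, mul_zero]
      have hR : mix (sigma 𝒜 σ₀) ((LinearMap.mul k H).compr₂ (sigma 𝒜 σ₀ x))
          (Coalgebra.comul (R := k) y) (Coalgebra.comul (R := k) z) = 0 := by
        refine supT_eval_zero_right 𝒜 _ (hcomul' c z hz) ?_ _
        intro i j hij a1 ha1 b1 hb1 c1 d1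
        rw [mix_tmul]
        simp only [LinearMap.compr₂_apply, LinearMap.mul_apply']
        by_cases hi : i = 0
        · have hb1' : b1 ∈ 𝒜 c := (by omega : j = c) ▸ hb1
          rw [σz2 _ _ (proj_zero_mul_right 𝒜 hc hb1' d1), mul_zero]
        · rw [σz2 _ _ (proj_ne 𝒜 ha1 hi), zero_mul]
      rw [hL, hR]
  -- the cocycle identity for all elements, by trilinearity
  have key : ∀ x y z : H, CocEq (sigma 𝒜 σ₀) x y z := by
    intro x
    refine DirectSum.Decomposition.inductionOn 𝒜
      (motive := fun x => ∀ y z, CocEq (sigma 𝒜 σ₀) x y z) ?_ ?_ ?_ x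
    · intro y z
      unfold CocEq
      have : sigma 𝒜 σ₀ (0 : H) = 0 := map_zero _
      rw [this, map_zero (Coalgebra.comul (R := k))]
      simp only [map_zero, LinearMap.zero_apply]
      have h0 : (LinearMap.mul k H).compr₂ (0 : H →ₗ[k] k) = 0 := by
        ext b d; simp
      rw [h0, mix_zero_right]
    · intro a xm
      intro y
      refine DirectSum.Decomposition.inductionOn 𝒜
        (motive := fun y => ∀ z, CocEq (sigma 𝒜 σ₀) (xm : H) y z) ?_ ?_ ?_ y
      · intro z
        unfold CocEq
        rw [map_zero (Coalgebra.comul (R := k))]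
        simp only [map_zero, LinearMap.zero_apply]
      · intro b ym
        intro z
        refine DirectSum.Decomposition.inductionOn 𝒜
          (motive := fun z => CocEq (sigma 𝒜 σ₀) (xm : H) (ym : H) z) ?_ ?_ ?_ z
        · beta_reduce
          unfold CocEq
          rw [map_zero (Coalgebra.comul (R := k))]
          simp only [map_zero]
          have h0 : (LinearMap.mul k H).compr₂ (0 : H →ₗ[k] k) = 0 := by
            ext b d; simp
          rw [h0, mix_zero_right]
        · intro c zm
          exact hom a _ xm.2 b _ ym.2 c _ zm.2
        · intro u v hu hv
          beta_reduce at hu hv ⊢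
          unfold CocEq at hu hv ⊢
          have e1 : (sigma 𝒜 σ₀).flip (u + v) = (sigma 𝒜 σ₀).flip u + (sigma 𝒜 σ₀).flip v :=
            map_add _ _ _
          rw [e1, compr₂_add_right, map_add (Coalgebra.comul (R := k))]
          simp only [map_add]
          rw [mix_add_right, hu, hv]
      · intro u v hu hv
        beta_reduce at hu hv
        intro z
        unfold CocEq at hu hv ⊢
        rw [map_add (Coalgebra.comul (R := k))]
        simp only [map_add, LinearMap.add_apply]
        rw [hu z, hv z]
    · intro u v hu hv
      beta_reduce at hu hv
      intro y z
      unfold CocEq at hu hv ⊢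
      have e1 : sigma 𝒜 σ₀ (u + v) = sigma 𝒜 σ₀ u + sigma 𝒜 σ₀ v := map_add _ _ _
      rw [e1, compr₂_add_right, map_add (Coalgebra.comul (R := k))]
      simp only [map_add, LinearMap.add_apply]
      rw [hu y z, hv y z, mix_add_right]
  -- convolution inverse identity
  have keyinv : ∀ x y : H,
      (mix (sigma 𝒜 σ₀) (sigma 𝒜 σ₀')
          (Coalgebra.comul (R := k) x) (Coalgebra.comul (R := k) y) =
        Coalgebra.counit (R := k) x * Coalgebra.counit (R := k) y) ∧
      (mix (sigma 𝒜 σ₀') (sigma 𝒜 σ₀)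
          (Coalgebra.comul (R := k) x) (Coalgebra.comul (R := k) y) =
        Coalgebra.counit (R := k) x * Coalgebra.counit (R := k) y) := by
    intro x
    refine DirectSum.Decomposition.inductionOn 𝒜
      (motive := fun x => ∀ y,
        (mix (sigma 𝒜 σ₀) (sigma 𝒜 σ₀')
            (Coalgebra.comul (R := k) x) (Coalgebra.comul (R := k) y) =
          Coalgebra.counit (R := k) x * Coalgebra.counit (R := k) y) ∧
        (mix (sigma 𝒜 σ₀') (sigma 𝒜 σ₀)
            (Coalgebra.comul (R := k) x) (Coalgebra.comul (R := k) y) =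
          Coalgebra.counit (R := k) x * Coalgebra.counit (R := k) y)) ?_ ?_ ?_ x
    · intro y; constructor <;> simp
    · intro a xm
      intro y
      refine DirectSum.Decomposition.inductionOn 𝒜
        (motive := fun y =>
          (mix (sigma 𝒜 σ₀) (sigma 𝒜 σ₀')
              (Coalgebra.comul (R := k) (xm : H)) (Coalgebra.comul (R := k) y) =
            Coalgebra.counit (R := k) (xm : H) * Coalgebra.counit (R := k) y) ∧
          (mix (sigma 𝒜 σ₀') (sigma 𝒜 σ₀)
              (Coalgebra.comul (R := k) (xm : H)) (Coalgebra.comul (R := k) y) =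
            Coalgebra.counit (R := k) (xm : H) * Coalgebra.counit (R := k) y)) ?_ ?_ ?_ y
      · constructor <;> simp
      · intro b ym
        by_cases ha : a = 0
        · by_cases hb : b = 0
          · have hx0 : (xm : H) ∈ 𝒜 0 := ha ▸ xm.2
            have hy0 : (ym : H) ∈ 𝒜 0 := hb ▸ ym.2
            obtain ⟨xs, hxs, hxm⟩ := comul_zero_expansion 𝒜 hcomul' hx0
            obtain ⟨ys, hys, hym⟩ := comul_zero_expansion 𝒜 hcomul' hy0
            have hconv := hσ₀' _ hx0 _ hy0 xs ys hxs hys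
            constructor
            · rw [mix_expansion _ _ hxs hys]
              have L1 : (xs.map fun p => (ys.map fun q =>
                    sigma 𝒜 σ₀ p.1 q.1 * sigma 𝒜 σ₀' p.2 q.2).sum).sum
                  = (xs.map fun p => (ys.map fun q =>
                    σ₀ p.1 q.1 * σ₀' p.2 q.2).sum).sum := by
                refine congrArg List.sum (List.map_congr_left ?_)
                intro p hp
                refine congrArg List.sum (List.map_congr_left ?_)
                intro q hq
                obtain ⟨hp1, hp2⟩ := hxm p hp
                obtain ⟨hq1, hq2⟩ := hym q hq
                rw [σeq _ hp1 _ hq1, σ'eq _ hp2 _ hq2]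
              rw [L1]
              exact hconv.1
            · rw [mix_expansion _ _ hxs hys]
              have L1 : (xs.map fun p => (ys.map fun q =>
                    sigma 𝒜 σ₀' p.1 q.1 * sigma 𝒜 σ₀ p.2 q.2).sum).sum
                  = (xs.map fun p => (ys.map fun q =>
                    σ₀' p.1 q.1 * σ₀ p.2 q.2).sum).sum := by
                refine congrArg List.sum (List.map_congr_left ?_)
                intro p hp
                refine congrArg List.sum (List.map_congr_left ?_)
                intro q hq
                obtain ⟨hp1, hp2⟩ := hxm p hp
                obtain ⟨hq1, hq2⟩ := hym q hq
                rw [σ'eq _ hp1 _ hq1, σeq _ hp2 _ hq2]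
              rw [L1]
              exact hconv.2
          · have hεy : Coalgebra.counit (R := k) (ym : H) = 0 :=
              counit_of_pos 𝒜 hcomul' b hb _ ym.2
            constructor
            · have hL : mix (sigma 𝒜 σ₀) (sigma 𝒜 σ₀')
                  (Coalgebra.comul (R := k) (xm : H)) (Coalgebra.comul (R := k) (ym : H)) = 0 := by
                refine supT_eval_zero_right 𝒜 _ (hcomul' b _ ym.2) ?_ _
                intro i j hij a1 ha1 b1 hb1 c1 d1
                rw [mix_tmul]
                by_cases hi : i = 0
                · have hb1' : b1 ∈ 𝒜 b := (by omega : j = b) ▸ hb1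
                  rw [σ'z2 _ _ (proj_ne 𝒜 hb1' hb), mul_zero]
                · rw [σz2 _ _ (proj_ne 𝒜 ha1 hi), zero_mul]
              rw [hL, hεy, mul_zero]
            · have hL : mix (sigma 𝒜 σ₀') (sigma 𝒜 σ₀)
                  (Coalgebra.comul (R := k) (xm : H)) (Coalgebra.comul (R := k) (ym : H)) = 0 := by
                refine supT_eval_zero_right 𝒜 _ (hcomul' b _ ym.2) ?_ _
                intro i j hij a1 ha1 b1 hb1 c1 d1
                rw [mix_tmul]
                by_cases hi : i = 0
                · have hb1' : b1 ∈ 𝒜 b := (by omega : j = b) ▸ hb1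
                  rw [σz2 _ _ (proj_ne 𝒜 hb1' hb), mul_zero]
                · rw [σ'z2 _ _ (proj_ne 𝒜 ha1 hi), zero_mul]
              rw [hL, hεy, mul_zero]
        · have hεx : Coalgebra.counit (R := k) (xm : H) = 0 :=
            counit_of_pos 𝒜 hcomul' a ha _ xm.2
          constructor
          · have hL : mix (sigma 𝒜 σ₀) (sigma 𝒜 σ₀')
                (Coalgebra.comul (R := k) (xm : H)) (Coalgebra.comul (R := k) (ym : H)) = 0 := by
              refine supT_eval_zero_left 𝒜 _ (hcomul' a _ xm.2) ?_ _
              intro i j hij a1 ha1 b1 hb1 c1 d1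
              rw [mix_tmul]
              by_cases hi : i = 0
              · have hb1' : b1 ∈ 𝒜 a := (by omega : j = a) ▸ hb1
                rw [σ'z1 _ _ (proj_ne 𝒜 hb1' ha), mul_zero]
              · rw [σz1 _ _ (proj_ne 𝒜 ha1 hi), zero_mul]
            rw [hL, hεx, zero_mul]
          · have hL : mix (sigma 𝒜 σ₀') (sigma 𝒜 σ₀)
                (Coalgebra.comul (R := k) (xm : H)) (Coalgebra.comul (R := k) (ym : H)) = 0 := by
              refine supT_eval_zero_left 𝒜 _ (hcomul' a _ xm.2) ?_ _
              intro i j hij a1 ha1 b1 hb1 c1 d1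
              rw [mix_tmul]
              by_cases hi : i = 0
              · have hb1' : b1 ∈ 𝒜 a := (by omega : j = a) ▸ hb1
                rw [σz1 _ _ (proj_ne 𝒜 hb1' ha), mul_zero]
              · rw [σ'z1 _ _ (proj_ne 𝒜 ha1 hi), zero_mul]
            rw [hL, hεx, zero_mul]
      · intro u v hu hv
        obtain ⟨h1, h2⟩ := hu
        obtain ⟨h3, h4⟩ := hv
        constructor <;>
          · simp only [map_add, LinearMap.add_apply, h1, h2, h3, h4]
            ring
    · intro u v hu hv
      intro y
      obtain ⟨h1, h2⟩ := hu y
      obtain ⟨h3, h4⟩ := hv y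
      constructor <;>
        · simp only [map_add, LinearMap.add_apply, h1, h2, h3, h4]
          ring
  -- assemble
  refine ⟨sigma 𝒜 σ₀, ?_, ?_, ?_, ?_, ⟨sigma 𝒜 σ₀', ?_⟩⟩
  · exact σeq
  · intro m n hmn x hx y hy
    by_cases hm : m = 0
    · have hn : n ≠ 0 := fun h => hmn ⟨hm, h⟩
      exact σz2 x y (proj_ne 𝒜 hy hn)
    · exact σz1 x y (proj_ne 𝒜 hx hm)
  · intro x y z xs ys zs hxs hys hzs
    have hL : (xs.map fun px => (ys.map fun py =>
          sigma 𝒜 σ₀ px.1 py.1 * sigma 𝒜 σ₀ (px.2 * py.2) z).sum).sum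
        = mix (sigma 𝒜 σ₀) ((LinearMap.mul k H).compr₂ ((sigma 𝒜 σ₀).flip z))
            (Coalgebra.comul (R := k) x) (Coalgebra.comul (R := k) y) := by
      rw [mix_expansion _ _ hxs hys]
      simp only [LinearMap.compr₂_apply, LinearMap.mul_apply', LinearMap.flip_apply]
    have hR : (ys.map fun py => (zs.map fun pz =>
          sigma 𝒜 σ₀ py.1 pz.1 * sigma 𝒜 σ₀ x (py.2 * pz.2)).sum).sum
        = mix (sigma 𝒜 σ₀) ((LinearMap.mul k H).compr₂ (sigma 𝒜 σ₀ x))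
            (Coalgebra.comul (R := k) y) (Coalgebra.comul (R := k) z) := by
      rw [mix_expansion _ _ hys hzs]
      simp only [LinearMap.compr₂_apply, LinearMap.mul_apply']
    rw [hL, hR]
    exact key x y z
  · intro x
    constructor
    · rw [hσ, proj_same 𝒜 h1mem, (hσ₀norm _ (proj_mem 𝒜 0 x)).1, hcp]
    · rw [hσ, proj_same 𝒜 h1mem, (hσ₀norm _ (proj_mem 𝒜 0 x)).2, hcp]
  · intro x y xs ys hxs hys
    obtain ⟨h1, h2⟩ := keyinv x y
    constructor
    · rw [← h1, mix_expansion _ _ hxs hys]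
    · rw [← h2, mix_expansion _ _ hxs hys]
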